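/- Let n ≥ 1 and ζ > 0. Then the set of vectors (p₀, p) ∈ ℤ × ℤⁿ such that p₀ ≥ 1, ‖p‖² < p₀², and there exist integers k ≥ 1 and ℓ ≥ 1 with ℓ² − (p₀² − ‖p‖²)·k² = 1 for which the Lebesgue measure of E = {r ∈ ℝⁿ : k²·(p₀ + ⟨p, r⟩)² < ℓ²·(1 − ‖r‖²)} is at least ζ, is a finite set. -/

import Mathlib

set_option maxHeartbeats 1000000

open MeasureTheory Metric Finset in
private lemma pell_key (K El P0 a2 S Mm W : ℝ) (hK : 1 ≤ K) (hEl : 1 ≤ El)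
    (ha2 : 0 ≤ a2) (hMm : 0 ≤ Mm) (hW : 0 ≤ W)
    (hpell : El ^ 2 = (P0 ^ 2 - a2) * K ^ 2 + 1)
    (hI : K ^ 2 * (2 * P0 + S) ^ 2 + El ^ 2 * (Mm + W) ≤ 4 * El ^ 2)
    (hII : S ^ 2 ≤ a2 * Mm) :
    W * (El ^ 2 + K ^ 2 * a2) ≤ 4 := by
  have hEl2 : (1:ℝ) ≤ El ^ 2 := by nlinarith
  rcases ha2.eq_or_lt with h0 | hpos
  · have hS : S = 0 := by nlinarith [sq_nonneg S]
    subst hS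
    subst h0
    nlinarith [hI, hpell, mul_nonneg (sq_nonneg El) hMm]
  · have hM : (0:ℝ) < El ^ 2 + K ^ 2 * a2 := by positivity
    have hstep : 4 * K ^ 2 * El ^ 2 * P0 ^ 2
        ≤ (El ^ 2 + K ^ 2 * a2) * (K ^ 2 * (2 * P0 + S) ^ 2 + El ^ 2 * Mm) := by
      have h1 : a2 * (4 * K ^ 2 * El ^ 2 * P0 ^ 2)
          ≤ a2 * ((El ^ 2 + K ^ 2 * a2) * (K ^ 2 * (2 * P0 + S) ^ 2 + El ^ 2 * Mm)) := by
        nlinarith [sq_nonneg (K ^ 2 * a2 * (2 * P0 + S) + El ^ 2 * S),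
          mul_le_mul_of_nonneg_left hII (le_of_lt (by positivity : (0:ℝ) < El ^ 2 * (El ^ 2 + K ^ 2 * a2)))]
      exact le_of_mul_le_mul_left h1 hpos
    have hpell4 : 4 * El ^ 2 * (El ^ 2 + K ^ 2 * a2) - 4 * K ^ 2 * El ^ 2 * P0 ^ 2 = 4 * El ^ 2 := by
      linear_combination (4 * El ^ 2) * hpell
    have h2 : (El ^ 2 + K ^ 2 * a2) * (El ^ 2 * W) ≤ 4 * El ^ 2 := by
      nlinarith [mul_le_mul_of_nonneg_left hI hM.le, hstep, hpell4]
    nlinarith [h2, hEl2, mul_nonneg hW hM.le]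

theorem finitely_many_large_submaximality_domains (n : ℕ) (hn : 1 ≤ n) (ζ : ℝ) (hζ : 0 < ζ) :
    {v : ℤ × (Fin n → ℤ) |
      1 ≤ v.1 ∧ (∑ i, (v.2 i) ^ 2) < v.1 ^ 2 ∧
      ∃ k ℓ : ℤ, 1 ≤ k ∧ 1 ≤ ℓ ∧ ℓ ^ 2 - (v.1 ^ 2 - ∑ i, (v.2 i) ^ 2) * k ^ 2 = 1 ∧
        ENNReal.ofReal ζ ≤
          MeasureTheory.volume
            {r : EuclideanSpace ℝ (Fin n) |
              (k : ℝ) ^ 2 * ((v.1 : ℝ) + ∑ i, (v.2 i : ℝ) * r i) ^ 2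
                < (ℓ : ℝ) ^ 2 * (1 - ‖r‖ ^ 2)}}.Finite := by
  classical
  have hn0 : (n : ℝ) ≠ 0 := Nat.cast_ne_zero.mpr (by omega)
  have normsq : ∀ x : EuclideanSpace ℝ (Fin n), ‖x‖ ^ 2 = ∑ i, (x i) ^ 2 := by
    intro x
    simp only [EuclideanSpace.norm_eq, Real.norm_eq_abs, sq_abs]
    exact Real.sq_sqrt (by positivity)
  set V : ENNReal := MeasureTheory.volume (Metric.ball (0 : EuclideanSpace ℝ (Fin n)) 1) with hV
  have hVfin : V ≠ ⊤ := MeasureTheory.measure_ball_lt_top.ne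
  have hVpos : 0 < V := Metric.measure_ball_pos _ _ one_pos
  set Vr : ℝ := V.toReal with hVr
  have hVrpos : 0 < Vr := ENNReal.toReal_pos hVpos.ne' hVfin
  set c : ℝ := ζ / Vr with hc
  have hcpos : 0 < c := div_pos hζ hVrpos
  set Bd : ℝ := 4 / c ^ ((2:ℝ) / n) with hBd
  have hBdpos : 0 < Bd := by positivity
  -- main bound
  have main : ∀ v : ℤ × (Fin n → ℤ),
      (1 ≤ v.1 ∧ (∑ i, (v.2 i) ^ 2) < v.1 ^ 2 ∧
      ∃ k ℓ : ℤ, 1 ≤ k ∧ 1 ≤ ℓ ∧ ℓ ^ 2 - (v.1 ^ 2 - ∑ i, (v.2 i) ^ 2) * k ^ 2 = 1 ∧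
        ENNReal.ofReal ζ ≤
          MeasureTheory.volume
            {r : EuclideanSpace ℝ (Fin n) |
              (k : ℝ) ^ 2 * ((v.1 : ℝ) + ∑ i, (v.2 i : ℝ) * r i) ^ 2
                < (ℓ : ℝ) ^ 2 * (1 - ‖r‖ ^ 2)}) →
      ((v.1 : ℝ) ^ 2 ≤ 2 * Bd ∧ ∀ i, ((v.2 i : ℝ)) ^ 2 ≤ Bd) := by
    rintro v ⟨hv1, hv2, k, ℓ, hk, hl, hpellZ, hvol⟩
    set E := {r : EuclideanSpace ℝ (Fin n) |
        (k : ℝ) ^ 2 * ((v.1 : ℝ) + ∑ i, (v.2 i : ℝ) * r i) ^ 2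
          < (ℓ : ℝ) ^ 2 * (1 - ‖r‖ ^ 2)} with hE
    set P0 : ℝ := (v.1 : ℝ) with hP0def
    set K : ℝ := (k : ℝ) with hKdef
    set El : ℝ := (ℓ : ℝ) with hEldef
    set a2 : ℝ := ∑ i, ((v.2 i : ℝ)) ^ 2 with ha2def
    have hK1 : (1:ℝ) ≤ K := by rw [hKdef]; exact_mod_cast hk
    have hEl1 : (1:ℝ) ≤ El := by rw [hEldef]; exact_mod_cast hl
    have hP01 : (1:ℝ) ≤ P0 := by rw [hP0def]; exact_mod_cast hv1
    have ha2nn : 0 ≤ a2 := by positivity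
    have ha2lt : a2 < P0 ^ 2 := by
      rw [ha2def, hP0def]
      exact_mod_cast hv2
    have hpell : El ^ 2 = (P0 ^ 2 - a2) * K ^ 2 + 1 := by
      have hcast : (ℓ:ℝ) ^ 2 - ((v.1:ℝ) ^ 2 - ∑ i, ((v.2 i : ℝ)) ^ 2) * (k:ℝ) ^ 2 = 1 := by
        exact_mod_cast hpellZ
      rw [hEldef, hP0def, hKdef, ha2def]
      linear_combination hcast
    set M : ℝ := El ^ 2 + K ^ 2 * a2 with hM
    have hM1 : (1:ℝ) ≤ M := by nlinarith
    have hM0 : (0:ℝ) < M := by linarith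
    -- E is nonempty
    have hEne : E.Nonempty := by
      apply MeasureTheory.nonempty_of_measure_ne_zero (μ := MeasureTheory.volume)
      intro h0
      rw [h0] at hvol
      exact absurd (le_antisymm hvol (zero_le)) (ENNReal.ofReal_pos.mpr hζ).ne'
    obtain ⟨r₀, hr₀⟩ := hEne
    set ρ : ℝ := 2 / Real.sqrt M with hρ
    have hsqrtM : 0 < Real.sqrt M := Real.sqrt_pos.mpr hM0
    have hρpos : 0 < ρ := by positivity
    -- E is contained in a small ball
    have hsub : E ⊆ Metric.closedBall r₀ ρ := by
      intro r hr
      rw [Metric.mem_closedBall, dist_eq_norm]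
      -- pairwise bound
      have hWsum : (∑ i, (r i - r₀ i) ^ 2) * M ≤ 4 := by
        have hrE : K ^ 2 * (P0 + ∑ i, (v.2 i : ℝ) * r i) ^ 2
            < El ^ 2 * (1 - ∑ i, (r i) ^ 2) := by
          have := hr
          rw [hE, Set.mem_setOf_eq, normsq r] at this
          exact this
        have hr0E : K ^ 2 * (P0 + ∑ i, (v.2 i : ℝ) * r₀ i) ^ 2
            < El ^ 2 * (1 - ∑ i, (r₀ i) ^ 2) := by
          have := hr₀
          rw [hE, Set.mem_setOf_eq, normsq r₀] at this
          exact this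
        set t : ℝ := ∑ i, (v.2 i : ℝ) * r i with ht
        set t' : ℝ := ∑ i, (v.2 i : ℝ) * r₀ i with ht'
        set Mm : ℝ := ∑ i, (r i + r₀ i) ^ 2 with hMm
        set W : ℝ := ∑ i, (r i - r₀ i) ^ 2 with hW
        have hMmnn : 0 ≤ Mm := by positivity
        have hWnn : 0 ≤ W := by positivity
        have hMmW : Mm + W = 2 * (∑ i, (r i) ^ 2) + 2 * (∑ i, (r₀ i) ^ 2) := by
          rw [hMm, hW, ← Finset.sum_add_distrib, Finset.mul_sum, Finset.mul_sum,
            ← Finset.sum_add_distrib]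
          exact Finset.sum_congr rfl fun i _ => by ring
        have hSsum : t + t' = ∑ i, (v.2 i : ℝ) * (r i + r₀ i) := by
          rw [ht, ht', ← Finset.sum_add_distrib]
          exact Finset.sum_congr rfl fun i _ => by ring
        have hII : (t + t') ^ 2 ≤ a2 * Mm := by
          rw [hSsum, ha2def, hMm]
          exact Finset.sum_mul_sq_le_sq_mul_sq Finset.univ _ _
        have hI : K ^ 2 * (2 * P0 + (t + t')) ^ 2 + El ^ 2 * (Mm + W) ≤ 4 * El ^ 2 := by
          nlinarith [hrE, hr0E, mul_nonneg (sq_nonneg K) (sq_nonneg (t - t'))]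
        exact pell_key K El P0 a2 (t + t') Mm W hK1 hEl1 ha2nn hMmnn hWnn hpell hI hII
      have hnorm2 : ‖r - r₀‖ ^ 2 ≤ 4 / M := by
        rw [normsq (r - r₀)]
        simp only [PiLp.sub_apply]
        rw [le_div_iff₀ hM0]
        exact hWsum
      have hρ2 : (4:ℝ) / M = ρ ^ 2 := by
        rw [hρ, div_pow, Real.sq_sqrt hM0.le]
        norm_num
      calc ‖r - r₀‖ = Real.sqrt (‖r - r₀‖ ^ 2) := (Real.sqrt_sq (norm_nonneg _)).symm
        _ ≤ Real.sqrt (ρ ^ 2) := Real.sqrt_le_sqrt (hρ2 ▸ hnorm2)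
        _ = ρ := Real.sqrt_sq hρpos.le
    -- volume comparison
    have hvol2 : ENNReal.ofReal ζ ≤ ENNReal.ofReal (ρ ^ n) * V := by
      refine hvol.trans ?_
      calc MeasureTheory.volume E ≤ MeasureTheory.volume (Metric.closedBall r₀ ρ) :=
            MeasureTheory.measure_mono hsub
        _ = ENNReal.ofReal (ρ ^ (Module.finrank ℝ (EuclideanSpace ℝ (Fin n)))) * V := by
            rw [hV]
            exact MeasureTheory.Measure.addHaar_closedBall _ _ hρpos.le
        _ = ENNReal.ofReal (ρ ^ n) * V := by rw [finrank_euclideanSpace_fin]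
    have hζρ : ζ ≤ ρ ^ n * Vr := by
      have hfin : ENNReal.ofReal (ρ ^ n) * V ≠ ⊤ := ENNReal.mul_ne_top ENNReal.ofReal_ne_top hVfin
      have := ENNReal.toReal_mono hfin hvol2
      rwa [ENNReal.toReal_ofReal hζ.le, ENNReal.toReal_mul,
        ENNReal.toReal_ofReal (by positivity : (0:ℝ) ≤ ρ ^ n)] at this
    have hcρ : c ≤ ρ ^ n := (div_le_iff₀ hVrpos).mpr hζρ
    have hρroot : c ^ ((1:ℝ) / n) ≤ ρ := by
      have h1 : c ^ ((1:ℝ) / n) ≤ (ρ ^ n) ^ ((1:ℝ) / n) :=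
        Real.rpow_le_rpow hcpos.le hcρ (by positivity)
      rwa [← Real.rpow_natCast ρ n, ← Real.rpow_mul hρpos.le, mul_one_div,
        div_self hn0, Real.rpow_one] at h1
    have hMBd : M ≤ Bd := by
      have h2 : c ^ ((2:ℝ) / n) ≤ ρ ^ 2 := by
        have := pow_le_pow_left₀ (Real.rpow_nonneg hcpos.le _) hρroot 2
        rwa [← Real.rpow_natCast (c ^ ((1:ℝ) / n)) 2, ← Real.rpow_mul hcpos.le,
          show (1 / (n:ℝ)) * (2:ℕ) = 2 / n by push_cast; ring] at this
      have hρ2 : ρ ^ 2 = 4 / M := by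
        rw [hρ, div_pow, Real.sq_sqrt hM0.le]
        norm_num
      rw [hρ2] at h2
      rw [hBd]
      have hcp : 0 < c ^ ((2:ℝ) / n) := Real.rpow_pos_of_pos hcpos _
      rw [le_div_iff₀ hcp]
      rw [le_div_iff₀ hM0] at h2
      linarith
    -- conclude bounds
    have hK2 : (1:ℝ) ≤ K ^ 2 := by nlinarith
    have hElBd : El ^ 2 ≤ Bd := by nlinarith [mul_nonneg (sq_nonneg K) ha2nn]
    have ha2Bd : a2 ≤ Bd := by
      have h5 : a2 ≤ K ^ 2 * a2 := le_mul_of_one_le_left ha2nn hK2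
      nlinarith [sq_nonneg El]
    have hDEl : P0 ^ 2 - a2 ≤ El ^ 2 := by
      nlinarith [mul_nonneg (by linarith : (0:ℝ) ≤ P0 ^ 2 - a2) (by linarith : (0:ℝ) ≤ K ^ 2 - 1)]
    constructor
    · linarith
    · intro i
      refine le_trans ?_ ha2Bd
      rw [ha2def]
      exact Finset.single_le_sum (f := fun i => ((v.2 i : ℝ)) ^ 2)
        (fun i _ => sq_nonneg _) (Finset.mem_univ i)
  -- wrap up: finiteness
  set C : ℤ := ⌈2 * Bd⌉ with hC
  have hCle : 2 * Bd ≤ (C : ℝ) := Int.le_ceil _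
  apply Set.Finite.subset
    ((Set.finite_Icc (-C) C).prod (Set.Finite.pi fun _ : Fin n => Set.finite_Icc (-C) C))
  rintro v hv
  obtain ⟨h1, h2⟩ := main v hv
  have habs : ∀ x : ℤ, ((x : ℝ)) ^ 2 ≤ 2 * Bd → x ∈ Set.Icc (-C) C := by
    intro x hx
    have h3 : |x| ≤ x ^ 2 := by nlinarith [sq_abs x, abs_nonneg x]
    have h4 : ((|x| : ℤ) : ℝ) ≤ (C : ℝ) := by
      calc ((|x| : ℤ) : ℝ) ≤ ((x : ℝ)) ^ 2 := by exact_mod_cast h3.trans_eq (by push_cast; ring)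
        _ ≤ 2 * Bd := hx
        _ ≤ (C : ℝ) := hCle
    have : |x| ≤ C := by exact_mod_cast h4
    rw [Set.mem_Icc]
    exact abs_le.mp this
  constructor
  · exact habs v.1 h1
  · rw [Set.mem_univ_pi]
    intro i
    exact habs (v.2 i) (le_trans (h2 i) (by linarith))
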